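/- Fix the observed data x_1,…,x_n. Define L^(I)(θ) = max{ ∏_{i=1}^n π_i : π_i>0, Σ_{i=1}^n π_i = 1, Σ_{i=1}^n π_i g^(I)(x_i;θ) = 0 } and L^(T)(θ,ξ) = max{ ∏_{i=1}^n π_i : π_i>0, Σ_{i=1}^n π_i = 1, Σ_{i=1}^n π_i g^(I)(x_i;θ) = 0, Σ_{i=1}^n π_i g^(D)(x_i;θ) − ξ = 0 }. Suppose: θ̂^(I) is the UNIQUE maximizer of L^(I) over Θ; (θ̂^(T), ξ̂^(T)) maximizes L^(T) over Θ×Γ; the constrained maxima defining L^(I)(θ̂^(I)), L^(I)(θ̂^(T)) and L^(T)(θ̂^(T), ξ̂^(T)) are attained, with weights π̂^(I) attaining L^(I)(θ̂^(I)); and Γ contains Σ_{i=1}^n π̂^(I)_i g^(D)(x_i; θ̂^(I)). Then θ̂^(T) = θ̂^(I), and L^(I)(θ̂^(T)) = L^(T)(θ̂^(T), ξ̂^(T)) = L^(I)(θ̂^(I)). In particular, the θ-component of the empirical likelihood estimator for the augmented problem with the unpenalized auxiliary parameter ξ coincides with the empirical likelihood estimator using g^(I) alone. -/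
import Mathlib


set_option autoImplicit false

noncomputable section

namespace Paper

/-- the empirical likelihood `L^{(I)}(θ)` based on the moment functions `g^{(I)}` alone -/
def LI {d pp r1 n : ℕ} (gI : (Fin d → ℝ) → (Fin pp → ℝ) → Fin r1 → ℝ)
    (x : Fin n → Fin d → ℝ) (θ : Fin pp → ℝ) : ℝ :=
  sSup {v : ℝ | ∃ π : Fin n → ℝ, (∀ i, 0 < π i) ∧ (∑ i, π i = 1) ∧
    (∀ j, ∑ i, π i * gI (x i) θ j = 0) ∧ v = ∏ i, π i}

/-- the empirical likelihood `L^{(T)}(θ,ξ)` for the augmented parameter, based on the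
stacked moment functions `(g^{(I)}(x;θ)ᵀ, g^{(D)}(x;θ)ᵀ − ξᵀ)ᵀ` -/
def LT {d pp r1 r2 n : ℕ} (gI : (Fin d → ℝ) → (Fin pp → ℝ) → Fin r1 → ℝ)
    (gD : (Fin d → ℝ) → (Fin pp → ℝ) → Fin r2 → ℝ)
    (x : Fin n → Fin d → ℝ) (θ : Fin pp → ℝ) (ξ : Fin r2 → ℝ) : ℝ :=
  sSup {v : ℝ | ∃ π : Fin n → ℝ, (∀ i, 0 < π i) ∧ (∑ i, π i = 1) ∧
    (∀ j, ∑ i, π i * gI (x i) θ j = 0) ∧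
    (∀ k, (∑ i, π i * gD (x i) θ k) - ξ k = 0) ∧ v = ∏ i, π i}


lemma prod_le_one_of_weights {n : ℕ} (π : Fin n → ℝ) (hpos : ∀ i, 0 < π i)
    (hsum : ∑ i, π i = 1) : ∏ i, π i ≤ 1 := by
  refine Finset.prod_le_one (fun i _ => (hpos i).le) (fun i _ => ?_)
  calc π i ≤ ∑ j, π j := Finset.single_le_sum (fun j _ => (hpos j).le) (Finset.mem_univ i)
    _ = 1 := hsum

lemma bddLI {d pp r1 n : ℕ} (gI : (Fin d → ℝ) → (Fin pp → ℝ) → Fin r1 → ℝ)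
    (x : Fin n → Fin d → ℝ) (θ : Fin pp → ℝ) :
    BddAbove {v : ℝ | ∃ π : Fin n → ℝ, (∀ i, 0 < π i) ∧ (∑ i, π i = 1) ∧
      (∀ j, ∑ i, π i * gI (x i) θ j = 0) ∧ v = ∏ i, π i} := by
  refine ⟨1, fun v hv => ?_⟩
  obtain ⟨π, h1, h2, _, hv⟩ := hv
  rw [hv]; exact prod_le_one_of_weights π h1 h2

lemma bddLT {d pp r1 r2 n : ℕ} (gI : (Fin d → ℝ) → (Fin pp → ℝ) → Fin r1 → ℝ)
    (gD : (Fin d → ℝ) → (Fin pp → ℝ) → Fin r2 → ℝ)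
    (x : Fin n → Fin d → ℝ) (θ : Fin pp → ℝ) (ξ : Fin r2 → ℝ) :
    BddAbove {v : ℝ | ∃ π : Fin n → ℝ, (∀ i, 0 < π i) ∧ (∑ i, π i = 1) ∧
      (∀ j, ∑ i, π i * gI (x i) θ j = 0) ∧
      (∀ k, (∑ i, π i * gD (x i) θ k) - ξ k = 0) ∧ v = ∏ i, π i} := by
  refine ⟨1, fun v hv => ?_⟩
  obtain ⟨π, h1, h2, _, _, hv⟩ := hv
  rw [hv]; exact prod_le_one_of_weights π h1 h2

/-- with the auxiliary parameter `ξ` left unpenalized, the θ-component of the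
augmented EL estimator coincides with the EL estimator based on `g^{(I)}` alone, and all
three empirical likelihood values agree. -/
theorem statement_3 {d pp r1 r2 n : ℕ}
    (Θ : Set (Fin pp → ℝ)) (Γ : Set (Fin r2 → ℝ))
    (gI : (Fin d → ℝ) → (Fin pp → ℝ) → Fin r1 → ℝ)
    (gD : (Fin d → ℝ) → (Fin pp → ℝ) → Fin r2 → ℝ)
    (x : Fin n → Fin d → ℝ)
    -- θ̂^{(I)} is the unique maximizer of L^{(I)} over Θ
    (θhatI : Fin pp → ℝ) (hθI_mem : θhatI ∈ Θ)
    (hθI_max : ∀ θ ∈ Θ, LI gI x θ ≤ LI gI x θhatI)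
    (hθI_unique : ∀ θ ∈ Θ, LI gI x θ = LI gI x θhatI → θ = θhatI)
    -- (θ̂^{(T)}, ξ̂^{(T)}) maximizes L^{(T)} over Θ × Γ
    (θhatT : Fin pp → ℝ) (ξhatT : Fin r2 → ℝ)
    (hθT_mem : θhatT ∈ Θ) (hξT_mem : ξhatT ∈ Γ)
    (hT_max : ∀ θ ∈ Θ, ∀ ξ ∈ Γ, LT gI gD x θ ξ ≤ LT gI gD x θhatT ξhatT)
    -- the constrained maximum defining L^{(I)}(θ̂^{(I)}) is attained by the weights π̂^{(I)}
    (πI : Fin n → ℝ) (hπI_pos : ∀ i, 0 < πI i) (hπI_sum : ∑ i, πI i = 1)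
    (hπI_con : ∀ j, ∑ i, πI i * gI (x i) θhatI j = 0)
    (hπI_att : ∏ i, πI i = LI gI x θhatI)
    -- the constrained maximum defining L^{(I)}(θ̂^{(T)}) is attained
    (hattIT : ∃ π : Fin n → ℝ, (∀ i, 0 < π i) ∧ (∑ i, π i = 1) ∧
      (∀ j, ∑ i, π i * gI (x i) θhatT j = 0) ∧ ∏ i, π i = LI gI x θhatT)
    -- the constrained maximum defining L^{(T)}(θ̂^{(T)}, ξ̂^{(T)}) is attained
    (hattT : ∃ π : Fin n → ℝ, (∀ i, 0 < π i) ∧ (∑ i, π i = 1) ∧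
      (∀ j, ∑ i, π i * gI (x i) θhatT j = 0) ∧
      (∀ k, (∑ i, π i * gD (x i) θhatT k) - ξhatT k = 0) ∧
      ∏ i, π i = LT gI gD x θhatT ξhatT)
    -- Γ contains the induced value of the auxiliary parameter at (π̂^{(I)}, θ̂^{(I)})
    (hΓ : (fun k => ∑ i, πI i * gD (x i) θhatI k) ∈ Γ) :
    θhatT = θhatI ∧
      LI gI x θhatT = LT gI gD x θhatT ξhatT ∧
      LT gI gD x θhatT ξhatT = LI gI x θhatI := by
  -- Step 1: LT(θT, ξT) ≤ LI(θT)
  obtain ⟨πT, hT1, hT2, hT3, _, hT5⟩ := hattT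
  have step1 : LT gI gD x θhatT ξhatT ≤ LI gI x θhatT := by
    rw [← hT5]
    exact le_csSup (bddLI gI x θhatT) ⟨πT, hT1, hT2, hT3, rfl⟩
  -- Step 2: LI(θT) ≤ LI(θI)
  have step2 : LI gI x θhatT ≤ LI gI x θhatI := hθI_max θhatT hθT_mem
  -- Step 3: LI(θI) ≤ LT(θI, ξI)
  have step3 : LI gI x θhatI ≤ LT gI gD x θhatI (fun k => ∑ i, πI i * gD (x i) θhatI k) := by
    rw [← hπI_att]
    exact le_csSup (bddLT gI gD x θhatI _)
      ⟨πI, hπI_pos, hπI_sum, hπI_con, fun k => by simp, rfl⟩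
  -- Step 4: LT(θI, ξI) ≤ LT(θT, ξT)
  have step4 : LT gI gD x θhatI (fun k => ∑ i, πI i * gD (x i) θhatI k)
      ≤ LT gI gD x θhatT ξhatT := hT_max θhatI hθI_mem _ hΓ
  have hEq : LI gI x θhatT = LI gI x θhatI := le_antisymm step2 (by linarith)
  have hθ : θhatT = θhatI := hθI_unique θhatT hθT_mem hEq
  refine ⟨hθ, le_antisymm (by linarith) step1, by linarith⟩


end Paper
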